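/- Let G be a p-valued group with valuation ω, i.e., ω satisfies the filtration axioms and additionally ω(x) < ∞ for x ≠ e, ω(x) > 1/(p-1) for all x, and ω(x^p) = ω(x) + 1 for all x. Then the associated graded abelian group gr(G) = ⊕_ν G_ν/G_ν⁺ with the ε-action induced by x ↦ x^p is a torsion-free (equivalently, free) graded module over 𝔽_p[ε]. -/

import Mathlib

open scoped ENNReal



namespace PVal

variable {H : Type*} [Group H]

/-- partial products: `Pr c n = c 0 * c 1 * ⋯ * c (n-1)` -/
def Pr (c : ℕ → H) : ℕ → H
  | 0 => 1
  | n+1 => Pr c n * c n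

/-- difference operator -/
def Dl (c : ℕ → H) : ℕ → H := fun n => (c n)⁻¹ * c (n + 1)

def mulSeq (c d : ℕ → H) : ℕ → H := fun n => c n * d n
def conjSeq (c t : ℕ → H) : ℕ → H := fun n => (t n)⁻¹ * c n * t n
def commSeq (c d : ℕ → H) : ℕ → H := fun n => (c n)⁻¹ * (d n)⁻¹ * c n * d n

lemma Dl_mul (c d : ℕ → H) :
    Dl (mulSeq c d) = mulSeq (conjSeq (Dl c) d) (Dl d) := by
  funext n
  simp only [Dl, mulSeq, conjSeq]
  group

lemma Dl_conj (c t : ℕ → H) :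
    Dl (conjSeq c t) =
      mulSeq (commSeq (conjSeq c t) (Dl t)) (conjSeq (conjSeq (Dl c) t) (Dl t)) := by
  funext n
  simp only [Dl, mulSeq, conjSeq, commSeq]
  group

lemma Dl_comm (c d : ℕ → H) :
    Dl (commSeq c d) =
      mulSeq (mulSeq (mulSeq
        (conjSeq (conjSeq (commSeq c (Dl d)) (Dl c)) (commSeq c d))
        (conjSeq (commSeq (Dl c) (Dl d)) (commSeq c d)))
        (commSeq (commSeq c d) (mulSeq (Dl c) (Dl d))))
        (conjSeq (commSeq (Dl c) d) (Dl d)) := by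
  funext n
  simp only [Dl, mulSeq, conjSeq, commSeq]
  group

lemma Dl_Pr (c : ℕ → H) : Dl (Pr c) = c := by
  funext n
  simp only [Dl, Pr]
  group

lemma telescope (c : ℕ → H) (n : ℕ) : c n = c 0 * Pr (Dl c) n := by
  induction n with
  | zero => simp [Pr]
  | succ n ih => rw [Pr, ← mul_assoc, ← ih, Dl]; group

lemma Pr_one : Pr (fun _ => (1:H)) = fun _ => (1:H) := by
  funext n
  induction n with
  | zero => rfl
  | succ n ih => rw [Pr, ih]; simp

lemma Pr_eq_one (c : ℕ → H) (n : ℕ) (h : ∀ i < n, c i = 1) : Pr c n = 1 := by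
  induction n with
  | zero => rfl
  | succ n ih =>
    rw [Pr, h n (by omega), ih (fun i hi => h i (by omega))]; simp

/-- pulling a constant left factor out to the right -/
lemma pull_right (a : H) (u : ℕ → H) (n : ℕ) :
    Pr (fun i => a * u i) n =
      Pr (conjSeq u (fun i => a ^ (-(i+1:ℤ)))) n * a ^ n := by
  induction n with
  | zero => simp [Pr]
  | succ n ih =>
    rw [Pr, ih, Pr, conjSeq]
    have h1 : (a ^ (-(n+1:ℤ)))⁻¹ = a ^ (n+1) := by
      rw [← zpow_neg, neg_neg, ← zpow_natCast]; push_cast; ring_nf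
    have h2 : (a ^ (-(n+1:ℤ))) = (a ^ (n+1))⁻¹ := by
      rw [← h1]; group
    rw [h1, h2, pow_succ]
    group

/-- interchange: product of pointwise product -/
lemma interchange (c d : ℕ → H) (n : ℕ) :
    Pr (mulSeq c d) n = Pr (conjSeq c (fun i => (Pr d i)⁻¹)) n * Pr d n := by
  induction n with
  | zero => simp [Pr]
  | succ n ih =>
    rw [Pr, ih, mulSeq, Pr, conjSeq, Pr]
    group

lemma Pr_choose_pow (g : H) (k : ℕ) (n : ℕ) :
    Pr (fun i => g ^ (i.choose (k+1))) n = g ^ (n.choose (k+2)) := by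
  induction n with
  | zero => simp [Pr]
  | succ n ih =>
    rw [Pr, ih, ← pow_add]
    have h : (n+1).choose (k+2) = n.choose (k+1) + n.choose (k+2) :=
      Nat.choose_succ_succ n (k+1)
    rw [h, Nat.add_comm]


structure Filt (H : Type*) [Group H] (p : ℕ) where
  F : ℕ → Subgroup H
  anti : ∀ {i j : ℕ}, i ≤ j → F j ≤ F i
  norm : ∀ i, (F i).Normal
  fcomm : ∀ {i j : ℕ} {a b : H}, a ∈ F i → b ∈ F j → a⁻¹ * b⁻¹ * a * b ∈ F (i + j)
  powp : ∀ {g : H}, g ∈ F 2 → g ^ p = 1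
  ftop : ∀ {g : H}, g ∈ F p → g = 1

variable {p : ℕ} (Φ : Filt H p)

/-- level function of the class `(r, a)` at depth `j` -/
def lam (p r a j : ℕ) : ℕ := min p (max 1 (max j r + a))

/-- truncated graded-class membership -/
def VGn (J r a : ℕ) (c : ℕ → H) : Prop :=
  (∀ n < r, c n = 1) ∧ ∀ j ≤ J, ∀ n, Dl^[j] c n ∈ Φ.F (lam p r a j)

/-- graded-class membership: `c` behaves like `∑_{j ≥ r} d_j C(n,j)` with `d_j` of
filtration level `≥ j + a`. -/
def VG (r a : ℕ) (c : ℕ → H) : Prop :=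
  (∀ n < r, c n = 1) ∧ ∀ j n, Dl^[j] c n ∈ Φ.F (lam p r a j)

lemma VG_iff (r a : ℕ) (c : ℕ → H) : VG Φ r a c ↔ ∀ J, VGn Φ J r a c := by
  constructor
  · intro h J; exact ⟨h.1, fun j _ n => h.2 j n⟩
  · intro h; exact ⟨(h 0).1, fun j n => (h j).2 j le_rfl n⟩

lemma VGn_mono {J' J r' r a' a : ℕ} {c : ℕ → H} (hJ : J' ≤ J) (hr : r' ≤ r) (ha : a' ≤ a)
    (h : VGn Φ J r a c) : VGn Φ J' r' a' c := by
  refine ⟨fun n hn => h.1 n (by omega), fun j hj n => Φ.anti ?_ (h.2 j (by omega) n)⟩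
  simp only [lam]; omega

lemma VGn_dl {J r a : ℕ} {c : ℕ → H} (h : VGn Φ (J+1) r a c) :
    VGn Φ J (r-1) (a+1) (Dl c) := by
  constructor
  · intro n hn
    simp only [Dl, h.1 n (by omega), h.1 (n+1) (by omega)]; group
  · intro j hj n
    have := h.2 (j+1) (by omega) n
    rw [Function.iterate_succ_apply] at this
    exact Φ.anti (by simp only [lam]; omega) this

lemma key (J : ℕ) :
    (∀ r a s b c d, VGn Φ J r a c → VGn Φ J s b d →
        VGn Φ J (min r s) (min a b) (mulSeq c d)) ∧
    (∀ r a c t, VGn Φ J r a c → VGn Φ J 0 0 t → VGn Φ J r a (conjSeq c t)) ∧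
    (∀ r a s b c d, VGn Φ J r a c → VGn Φ J s b d →
        VGn Φ J (max r s) (a + b) (commSeq c d)) := by
  induction J with
  | zero =>
    refine ⟨?_, ?_, ?_⟩
    · intro r a s b c d hc hd
      refine ⟨fun n hn => ?_, fun j hj n => ?_⟩
      · simp [mulSeq, hc.1 n (by omega), hd.1 n (by omega)]
      · interval_cases j
        simp only [Function.iterate_zero_apply, mulSeq]
        have h1 := Φ.anti (i := lam p (min r s) (min a b) 0) (by simp only [lam]; omega)
          (hc.2 0 le_rfl n)
        have h2 := Φ.anti (i := lam p (min r s) (min a b) 0) (by simp only [lam]; omega)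
          (hd.2 0 le_rfl n)
        exact mul_mem h1 h2
    · intro r a c t hc ht
      refine ⟨fun n hn => ?_, fun j hj n => ?_⟩
      · simp [conjSeq, hc.1 n (by omega)]
      · interval_cases j
        simp only [Function.iterate_zero_apply, conjSeq]
        have := (Φ.norm _).conj_mem _ (hc.2 0 le_rfl n) (t n)⁻¹
        simpa using this
    · intro r a s b c d hc hd
      refine ⟨fun n hn => ?_, fun j hj n => ?_⟩
      · rcases Nat.lt_or_ge n r with h | h
        · simp [commSeq, hc.1 n h]
        · simp [commSeq, hd.1 n (by omega)]
      · interval_cases j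
        simp only [Function.iterate_zero_apply, commSeq]
        have := Φ.fcomm (hc.2 0 le_rfl n) (hd.2 0 le_rfl n)
        exact Φ.anti (by simp only [lam]; omega) this
  | succ J ih =>
    obtain ⟨ihmul, ihconj, ihcomm⟩ := ih
    refine ⟨?_, ?_, ?_⟩
    · -- mul
      intro r a s b c d hc hd
      refine ⟨fun n hn => ?_, fun j hj n => ?_⟩
      · simp [mulSeq, hc.1 n (by omega), hd.1 n (by omega)]
      · match j, hj with
        | 0, _ =>
          simp only [Function.iterate_zero_apply, mulSeq]
          exact mul_mem
            (Φ.anti (by simp only [lam]; omega) (hc.2 0 (by omega) n))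
            (Φ.anti (by simp only [lam]; omega) (hd.2 0 (by omega) n))
        | (j+1), hj =>
          rw [Function.iterate_succ_apply, Dl_mul]
          have hDc := VGn_dl Φ hc
          have hDd := VGn_dl Φ hd
          have hd0 : VGn Φ J 0 0 d := VGn_mono Φ (by omega) (by omega) (by omega) hd
          have h1 := ihconj _ _ _ _ hDc hd0
          have h2 := ihmul _ _ _ _ _ _ h1 hDd
          exact Φ.anti (by simp only [lam]; omega) (h2.2 j (by omega) n)
    · -- conj
      intro r a c t hc ht
      refine ⟨fun n hn => ?_, fun j hj n => ?_⟩
      · simp [conjSeq, hc.1 n (by omega)]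
      · match j, hj with
        | 0, _ =>
          simp only [Function.iterate_zero_apply, conjSeq]
          simpa using (Φ.norm _).conj_mem _ (hc.2 0 (by omega) n) (t n)⁻¹
        | (j+1), hj =>
          rw [Function.iterate_succ_apply, Dl_conj]
          have hcJ : VGn Φ J r a c := VGn_mono Φ (by omega) le_rfl le_rfl hc
          have htJ : VGn Φ J 0 0 t := VGn_mono Φ (by omega) le_rfl le_rfl ht
          have hX' := ihconj _ _ _ _ hcJ htJ
          have hDt := VGn_dl Φ ht
          have hDt0 : VGn Φ J 0 0 (Dl t) := VGn_mono Φ le_rfl le_rfl (by omega) hDt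
          have h1 := ihcomm _ _ _ _ _ _ hX' hDt
          have hDc := VGn_dl Φ hc
          have h2 := ihconj _ _ _ _ hDc htJ
          have h3 := ihconj _ _ _ _ h2 hDt0
          have h4 := ihmul _ _ _ _ _ _ h1 h3
          exact Φ.anti (by simp only [lam]; omega) (h4.2 j (by omega) n)
    · -- comm
      intro r a s b c d hc hd
      refine ⟨fun n hn => ?_, fun j hj n => ?_⟩
      · rcases Nat.lt_or_ge n r with h | h
        · simp [commSeq, hc.1 n h]
        · simp [commSeq, hd.1 n (by omega)]
      · match j, hj with
        | 0, _ =>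
          simp only [Function.iterate_zero_apply, commSeq]
          exact Φ.anti (by simp only [lam]; omega)
            (Φ.fcomm (hc.2 0 (by omega) n) (hd.2 0 (by omega) n))
        | (j+1), hj =>
          rw [Function.iterate_succ_apply, Dl_comm]
          have hcJ : VGn Φ J r a c := VGn_mono Φ (by omega) le_rfl le_rfl hc
          have hdJ : VGn Φ J s b d := VGn_mono Φ (by omega) le_rfl le_rfl hd
          have hDc := VGn_dl Φ hc
          have hDd := VGn_dl Φ hd
          have hcd := ihcomm _ _ _ _ _ _ hcJ hdJ
          have hcd0 : VGn Φ J 0 0 (commSeq c d) :=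
            VGn_mono Φ le_rfl (by omega) (by omega) hcd
          have hDc0 : VGn Φ J 0 0 (Dl c) := VGn_mono Φ le_rfl (by omega) (by omega) hDc
          have hDd0 : VGn Φ J 0 0 (Dl d) := VGn_mono Φ le_rfl (by omega) (by omega) hDd
          -- A1
          have hA1 := ihconj _ _ _ _ (ihconj _ _ _ _
            (ihcomm _ _ _ _ _ _ hcJ hDd) hDc0) hcd0
          -- A2
          have hA2 := ihconj _ _ _ _ (ihcomm _ _ _ _ _ _ hDc hDd) hcd0
          -- A3
          have hA3 := ihcomm _ _ _ _ _ _ hcd (ihmul _ _ _ _ _ _ hDc hDd)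
          -- A4
          have hA4 := ihconj _ _ _ _ (ihcomm _ _ _ _ _ _ hDc hdJ) hDd0
          set R := max r s - 1
          set A := a + b + 1
          have hA1' : VGn Φ J R A _ := VGn_mono Φ le_rfl (by omega) (by omega) hA1
          have hA2' : VGn Φ J R A _ := VGn_mono Φ le_rfl (by omega) (by omega) hA2
          have hA3' : VGn Φ J R A _ := VGn_mono Φ le_rfl (by omega) (by omega) hA3
          have hA4' : VGn Φ J R A _ := VGn_mono Φ le_rfl (by omega) (by omega) hA4
          have h5 := ihmul _ _ _ _ _ _ (ihmul _ _ _ _ _ _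
            (ihmul _ _ _ _ _ _ hA1' hA2') hA3') hA4'
          have h6 : VGn Φ J R A _ := VGn_mono Φ le_rfl (by omega) (by omega) h5
          exact Φ.anti (by simp only [lam, R, A]; omega) (h6.2 j (by omega) n)

lemma VG_mono {r' r a' a : ℕ} {c : ℕ → H} (hr : r' ≤ r) (ha : a' ≤ a)
    (h : VG Φ r a c) : VG Φ r' a' c := by
  rw [VG_iff] at h ⊢
  exact fun J => VGn_mono Φ le_rfl hr ha (h J)

lemma VG_dl {r a : ℕ} {c : ℕ → H} (h : VG Φ r a c) : VG Φ (r-1) (a+1) (Dl c) := by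
  rw [VG_iff] at h ⊢
  exact fun J => VGn_dl Φ (h (J+1))

lemma VG_mul {r a s b : ℕ} {c d : ℕ → H} (hc : VG Φ r a c) (hd : VG Φ s b d) :
    VG Φ (min r s) (min a b) (mulSeq c d) := by
  rw [VG_iff] at hc hd ⊢
  exact fun J => (key Φ J).1 _ _ _ _ _ _ (hc J) (hd J)

lemma VG_conj {r a : ℕ} {c t : ℕ → H} (hc : VG Φ r a c) (ht : VG Φ 0 0 t) :
    VG Φ r a (conjSeq c t) := by
  rw [VG_iff] at hc ht ⊢
  exact fun J => (key Φ J).2.1 _ _ _ _ (hc J) (ht J)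

lemma VG_comm {r a s b : ℕ} {c d : ℕ → H} (hc : VG Φ r a c) (hd : VG Φ s b d) :
    VG Φ (max r s) (a + b) (commSeq c d) := by
  rw [VG_iff] at hc hd ⊢
  exact fun J => (key Φ J).2.2 _ _ _ _ _ _ (hc J) (hd J)

lemma VG_Pr {r a : ℕ} {c : ℕ → H} (h : VG Φ r a c) (ha : 1 ≤ a) :
    VG Φ (r+1) (a-1) (Pr c) := by
  constructor
  · intro n hn
    exact Pr_eq_one c n (fun i hi => h.1 i (by omega))
  · intro j n
    match j with
    | 0 =>
      simp only [Function.iterate_zero_apply]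
      have hall : ∀ m, Pr c m ∈ Φ.F (lam p r a 0) := by
        intro m
        induction m with
        | zero => exact one_mem _
        | succ m ih => exact mul_mem ih (h.2 0 m)
      exact Φ.anti (by simp only [lam]; omega) (hall n)
    | (j+1) =>
      rw [Function.iterate_succ_apply, Dl_Pr]
      exact Φ.anti (by simp only [lam]; omega) (h.2 j n)

lemma Dl_orbit (β g : H) :
    Dl (fun n => β ^ n * g * (β ^ n)⁻¹)
      = fun n => β ^ n * (g⁻¹ * β * g * β⁻¹) * (β ^ n)⁻¹ := by
  funext n
  simp only [Dl, pow_succ]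
  group

lemma orbit_iter (β : H) (j : ℕ) (g : H) :
    Dl^[j] (fun n => β ^ n * g * (β ^ n)⁻¹)
      = fun n => β ^ n * ((fun h => h⁻¹ * β * h * β⁻¹)^[j] g) * (β ^ n)⁻¹ := by
  induction j generalizing g with
  | zero => rfl
  | succ j ih =>
    rw [Function.iterate_succ_apply, Dl_orbit, ih, Function.iterate_succ_apply]

lemma VG_orbit {β g : H} (hβ : β ∈ Φ.F 1) {k : ℕ} (hk : 1 ≤ k) (hg : g ∈ Φ.F k) :
    VG Φ 0 k (fun n => β ^ n * g * (β ^ n)⁻¹) := by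
  constructor
  · intro n hn; omega
  · intro j n
    rw [orbit_iter]
    have hcore : (fun h => h⁻¹ * β * h * β⁻¹)^[j] g ∈ Φ.F (k + j) := by
      induction j with
      | zero => simpa using hg
      | succ j ih =>
        rw [Function.iterate_succ_apply']
        have := Φ.fcomm ih (inv_mem hβ)
        simpa [← add_assoc] using this
    have hmem : β ^ n * (fun h => h⁻¹ * β * h * β⁻¹)^[j] g * (β ^ n)⁻¹ ∈ Φ.F (k + j) := by
      simpa using (Φ.norm _).conj_mem _ hcore (β ^ n)
    exact Φ.anti (by simp only [lam]; omega) hmem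

def dz (e : ℕ → ℤ) : ℕ → ℤ := fun n => e (n+1) - e n

lemma Dl_zpow (g : H) (e : ℕ → ℤ) :
    Dl (fun n => g ^ e n) = fun n => g ^ (dz e n) := by
  funext n
  simp only [Dl, dz, zpow_sub]
  group

lemma iter_Dl_zpow (g : H) (j : ℕ) (e : ℕ → ℤ) :
    Dl^[j] (fun n => g ^ e n) = fun n => g ^ (dz^[j] e n) := by
  induction j generalizing e with
  | zero => rfl
  | succ j ih =>
    rw [Function.iterate_succ_apply, Dl_zpow, ih, Function.iterate_succ_apply]

lemma VG_zpow {g : H} {K : ℕ} (hg : g ∈ Φ.F K) (hK : 1 ≤ K) (e : ℕ → ℤ)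
    (hdeg : ∀ b n, dz^[b] e n ≠ 0 → min p (max 1 b) ≤ K) :
    VG Φ 0 0 (fun n => g ^ e n) := by
  refine ⟨fun n hn => absurd hn (Nat.not_lt_zero n), fun j n => ?_⟩
  have hx : Dl^[j] (fun n => g ^ e n) n = g ^ (dz^[j] e n) :=
    congrFun (iter_Dl_zpow g j e) n
  rw [hx]
  by_cases h : dz^[j] e n = 0
  · rw [h]; simpa using one_mem _
  · have := hdeg j n h
    exact Φ.anti (by simp only [lam]; omega) (zpow_mem hg _)

lemma dz_iter_zero (m : ℕ) : dz^[m] (fun _ => (0:ℤ)) = fun _ => 0 := by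
  induction m with
  | zero => rfl
  | succ m ih =>
    rw [Function.iterate_succ_apply]
    have : dz (fun _ => (0:ℤ)) = fun _ => (0:ℤ) := by funext n; simp [dz]
    rw [this, ih]

lemma dz_const (z : ℤ) : dz (fun _ => z) = fun _ => 0 := by
  funext n; simp [dz]

lemma VG_neglin {g : H} {K : ℕ} (hg : g ∈ Φ.F K) (hK : 1 ≤ K) :
    VG Φ 0 0 (fun n => g ^ (-(n+1 : ℤ))) := by
  apply VG_zpow Φ hg hK
  have h1 : dz (fun n => (-(n+1 : ℤ))) = fun _ => (-1:ℤ) := by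
    funext n; simp only [dz]; push_cast; ring
  intro b n hne
  match b with
  | 0 => omega
  | 1 => omega
  | (b+2) =>
    exfalso
    apply hne
    have hz : dz^[b+2] (fun n => (-(n+1 : ℤ))) = fun _ => 0 := by
      rw [Function.iterate_succ_apply, Function.iterate_succ_apply, h1, dz_const]
      exact dz_iter_zero b
    rw [hz]

lemma dz_negchoose (k : ℕ) :
    dz (fun n => -((n.choose (k+1) : ℤ))) = fun n => -((n.choose k : ℤ)) := by
  funext n
  simp only [dz, Nat.choose_succ_succ n k]
  push_cast
  ring

lemma dz_choose_high : ∀ k b, k < b →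
    dz^[b] (fun n => -((n.choose k : ℤ))) = fun _ => 0 := by
  intro k
  induction k with
  | zero =>
    intro b hb
    match b, hb with
    | (b+1), _ =>
      rw [Function.iterate_succ_apply]
      have hz : dz (fun n => -((n.choose 0 : ℤ))) = fun _ => (0:ℤ) := by
        funext n; simp [dz]
      rw [hz]
      exact dz_iter_zero b
  | succ k ih =>
    intro b hb
    match b, hb with
    | (b+1), hb =>
      rw [Function.iterate_succ_apply, dz_negchoose]
      exact ih b (by omega)

lemma VG_negchoose {g : H} {K : ℕ} (hg : g ∈ Φ.F K) (hK : 1 ≤ K) (k : ℕ)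
    (hk : min p k ≤ K) : VG Φ 0 0 (fun n => g ^ (-((n.choose k : ℤ)))) := by
  apply VG_zpow Φ hg hK
  intro b n hne
  rcases Nat.lt_or_ge k b with hb | hb
  · exfalso; apply hne; rw [dz_choose_high k b hb]
  · omega

lemma Pr_iter_one (s : ℕ) : Pr^[s] (fun _ => (1:H)) = fun _ => (1:H) := by
  induction s with
  | zero => rfl
  | succ s ih => rw [Function.iterate_succ_apply, Pr_one, ih]

lemma eval_trivial (s : ℕ) {r a : ℕ} {X : ℕ → H} (hp : p ≤ r + a) (hX : VG Φ r a X) :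
    Pr^[s] X p = 1 := by
  have hX1 : X = fun _ => 1 := by
    funext n
    apply Φ.ftop
    have h0 := hX.2 0 n
    have hl : lam p r a 0 = p := by simp only [lam]; omega
    rw [hl] at h0
    simpa using h0
  rw [hX1, Pr_iter_one]

lemma iterTwo {g : H} {K : ℕ} (hg : g ∈ Φ.F K) (hK : 1 ≤ K) :
    ∀ m j r2 a2 (Z : ℕ → H), VG Φ r2 a2 Z → m ≤ a2 → min p (j + m + 1) ≤ K →
    ∃ Z' : ℕ → H, VG Φ (r2 + m) (a2 - m) Z' ∧
      (Pr^[m] (fun n => Z n * g ^ (n.choose (j+1)))) p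
        = Z' p * g ^ (p.choose (j + m + 1)) ∧
      (m = 0 → Z' = Z) ∧
      (1 ≤ m → ∃ Z0 : ℕ → H, VG Φ (r2 + m - 1) (a2 - (m - 1)) Z0 ∧ Z' = Pr Z0) := by
  intro m
  induction m with
  | zero =>
    intro j r2 a2 Z hZ _ _
    refine ⟨Z, by simpa using hZ, ?_, fun _ => rfl, fun h => absurd h (by omega)⟩
    simp
  | succ m ih =>
    intro j r2 a2 Z hZ hma hdeg
    have ht : VG Φ 0 0 (fun i => g ^ (-((i.choose (j+2) : ℤ)))) :=
      VG_negchoose Φ hg hK (j+2) (by omega)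
    have hZhat : VG Φ r2 a2 (conjSeq Z (fun i => g ^ (-((i.choose (j+2) : ℤ))))) :=
      VG_conj Φ hZ ht
    have hPZ : VG Φ (r2+1) (a2-1)
        (Pr (conjSeq Z (fun i => g ^ (-((i.choose (j+2) : ℤ)))))) :=
      VG_Pr Φ hZhat (by omega)
    have key2 : Pr (fun n => Z n * g ^ (n.choose (j+1)))
        = fun n => Pr (conjSeq Z (fun i => g ^ (-((i.choose (j+2) : ℤ))))) n
            * g ^ (n.choose ((j+1)+1)) := by
      funext n
      have h3 : (fun i => (Pr (fun i' => g ^ (i'.choose (j+1))) i)⁻¹)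
          = fun i => g ^ (-((i.choose (j+2) : ℤ))) := by
        funext i
        rw [Pr_choose_pow, ← zpow_natCast g, ← zpow_neg]
      have h2 := interchange Z (fun i => g ^ (i.choose (j+1))) n
      rw [h3, Pr_choose_pow] at h2
      exact h2
    obtain ⟨Z', hZ', hval, hz0, hz1⟩ :=
      ih (j+1) (r2+1) (a2-1) _ hPZ (by omega) (by omega)
    refine ⟨Z', ?_, ?_, fun h => absurd h (by omega), ?_⟩
    · exact VG_mono Φ (by omega) (by omega) hZ'
    · rw [Function.iterate_succ_apply, key2, hval]
      have he : j + 1 + m + 1 = j + (m + 1) + 1 := by omega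
      rw [he]
    · intro _
      rcases Nat.eq_zero_or_pos m with rfl | hm
      · refine ⟨conjSeq Z (fun i => g ^ (-((i.choose (j+2) : ℤ)))),
          VG_mono Φ (by omega) (by omega) hZhat, ?_⟩
        rw [hz0 rfl]
      · obtain ⟨Z0, hZ0, hEq⟩ := hz1 hm
        exact ⟨Z0, VG_mono Φ (by omega) (by omega) hZ0, hEq⟩

lemma engine (hprime : p.Prime) :
    ∀ m r a s (X : ℕ → H), p ≤ r + a + m → s = a → 1 ≤ s → (2 ≤ a ∨ 1 ≤ r) →
      VG Φ r a X → Pr^[s] X p = 1 := by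
  intro m
  induction m with
  | zero =>
    intro r a s X hle _ _ _ hX
    exact eval_trivial Φ s (by omega) hX
  | succ m ihm =>
    intro r
    induction r with
    | zero =>
      intro a s X hle hsa hs hra hX
      have ha2 : 2 ≤ a := by
        rcases hra with h | h
        · exact h
        · omega
      by_cases hpa : p ≤ a
      · exact eval_trivial Φ s (by omega) hX
      · -- main case
        set g := X 0 with hgdef
        have hgF : g ∈ Φ.F a := by
          have h0 := hX.2 0 0
          have hl : lam p 0 a 0 = a := by simp only [lam]; omega
          rw [hl] at h0
          simpa using h0
        have hDX : VG Φ 0 (a+1) (Dl X) := VG_mono Φ (by omega) (by omega) (VG_dl Φ hX)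
        have hu : VG Φ 1 a (Pr (Dl X)) :=
          VG_mono Φ (by omega) (by omega) (VG_Pr Φ hDX (by omega))
        have htele : X = fun n => g * Pr (Dl X) n := by
          funext n; exact telescope X n
        have ht' : VG Φ 0 0 (fun i => g ^ (-(i+1:ℤ))) := VG_neglin Φ hgF (by omega)
        have hw : VG Φ 1 a (conjSeq (Pr (Dl X)) (fun i => g ^ (-(i+1:ℤ)))) :=
          VG_conj Φ hu ht'
        have hPw : VG Φ 2 (a-1) (Pr (conjSeq (Pr (Dl X)) (fun i => g ^ (-(i+1:ℤ))))) :=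
          VG_mono Φ (by omega) (by omega) (VG_Pr Φ hw (by omega))
        obtain ⟨s', rfl⟩ : ∃ s', s = s' + 1 := ⟨s - 1, by omega⟩
        have hPX : Pr X = fun n =>
            Pr (conjSeq (Pr (Dl X)) (fun i => g ^ (-(i+1:ℤ)))) n * g ^ (n.choose (0+1)) := by
          funext n
          have h4 := pull_right g (Pr (Dl X)) n
          have h5 : n.choose (0+1) = n := Nat.choose_one_right n
          rw [h5]
          conv_lhs => rw [htele]
          exact h4
        rw [Function.iterate_succ_apply, hPX]
        obtain ⟨Z', hZ', hval, hz0, hz1⟩ :=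
          iterTwo Φ hgF (by omega) s' 0 2 (a-1) _ hPw (by omega) (by omega)
        rw [hval]
        have hdvd : p ∣ p.choose (0 + s' + 1) :=
          hprime.dvd_choose_self (by omega) (by omega)
        obtain ⟨c', hc'⟩ := hdvd
        have hg2 : g ∈ Φ.F 2 := Φ.anti (by omega) hgF
        have hkill : g ^ (p.choose (0 + s' + 1)) = 1 := by
          rw [hc', pow_mul, Φ.powp hg2, one_pow]
        rw [hkill, mul_one]
        rcases Nat.eq_zero_or_pos s' with rfl | hs'
        · omega
        · obtain ⟨Z0, hZ0, rfl⟩ := hz1 (by omega)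
          have hZ0' : VG Φ (s'+1) 1 Z0 := VG_mono Φ (by omega) (by omega) hZ0
          have hfin := ihm (s'+1) 1 1 Z0 (by omega) rfl (by omega) (Or.inr (by omega)) hZ0'
          simpa using hfin
    | succ r ihr =>
      intro a s X hle hsa hs hra hX
      have hX0 : X 0 = 1 := hX.1 0 (by omega)
      have htele : X = Pr (Dl X) := by
        funext n
        have h := telescope X n
        rw [hX0, one_mul] at h
        exact h
      have hDX : VG Φ r (a+1) (Dl X) := VG_mono Φ (by omega) (by omega) (VG_dl Φ hX)
      rw [htele, ← Function.iterate_succ_apply]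
      exact ihr (a+1) (s+1) (Dl X) (by omega) (by omega) (by omega) (by omega) hDX

lemma kl_abstract (hprime : p.Prime) {α β : H} (hα : α ∈ Φ.F 1) (hβ : β ∈ Φ.F 1) :
    Pr (fun n => β ^ n * α * (β ^ n)⁻¹) p = α ^ p := by
  have hg' : α⁻¹ * β * α * β⁻¹ ∈ Φ.F 2 := by
    have := Φ.fcomm hα (inv_mem hβ)
    simpa using this
  have hDc : VG Φ 0 2 (Dl (fun n => β ^ n * α * (β ^ n)⁻¹)) := by
    rw [Dl_orbit]
    exact VG_orbit Φ hβ (by omega) hg'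
  have hu : VG Φ 1 1 (Pr (Dl (fun n => β ^ n * α * (β ^ n)⁻¹))) :=
    VG_mono Φ (by omega) (by omega) (VG_Pr Φ hDc (by omega))
  have hc0 : (fun n => β ^ n * α * (β ^ n)⁻¹) 0 = α := by simp
  have htele : (fun n => β ^ n * α * (β ^ n)⁻¹)
      = fun n => α * Pr (Dl (fun n => β ^ n * α * (β ^ n)⁻¹)) n := by
    funext n
    have h := telescope (fun n => β ^ n * α * (β ^ n)⁻¹) n
    simpa using h
  have ht : VG Φ 0 0 (fun i => α ^ (-(i+1:ℤ))) := VG_neglin Φ hα (by omega)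
  have hw : VG Φ 1 1 (conjSeq (Pr (Dl (fun n => β ^ n * α * (β ^ n)⁻¹)))
      (fun i => α ^ (-(i+1:ℤ)))) := VG_conj Φ hu ht
  have hPX : Pr (fun n => β ^ n * α * (β ^ n)⁻¹) p
      = Pr (conjSeq (Pr (Dl (fun n => β ^ n * α * (β ^ n)⁻¹)))
          (fun i => α ^ (-(i+1:ℤ)))) p * α ^ p := by
    conv_lhs => rw [htele]
    exact pull_right α _ p
  rw [hPX]
  have h1 := engine Φ hprime (p+1) 1 1 1 _ (by omega) rfl (by omega)
    (Or.inr (by omega)) hw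
  rw [Function.iterate_one] at h1
  rw [h1, one_mul]

section Outer

open scoped ENNReal

variable {G : Type*} [Group G]

lemma omega_inv (ω : G → ℝ≥0∞) (hone : ω 1 = ⊤)
    (h1 : ∀ x y : G, min (ω x) (ω y) ≤ ω (x * y⁻¹)) (x : G) : ω x⁻¹ = ω x := by
  have key : ∀ z : G, ω z ≤ ω z⁻¹ := by
    intro z
    have h := h1 1 z
    simpa [hone] using h
  refine le_antisymm ?_ (key x)
  have h := key x⁻¹
  simpa using h

lemma omega_mul (ω : G → ℝ≥0∞) (hone : ω 1 = ⊤)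
    (h1 : ∀ x y : G, min (ω x) (ω y) ≤ ω (x * y⁻¹)) (x y : G) :
    min (ω x) (ω y) ≤ ω (x * y) := by
  have h := h1 x y⁻¹
  rw [inv_inv] at h
  rw [← omega_inv ω hone h1 y]
  exact h

def levelSub (ω : G → ℝ≥0∞) (hone : ω 1 = ⊤)
    (h1 : ∀ x y : G, min (ω x) (ω y) ≤ ω (x * y⁻¹)) (w : ℝ≥0∞) : Subgroup G where
  carrier := {g | w ≤ ω g}
  one_mem' := by simp [Set.mem_setOf_eq, hone]
  mul_mem' := by
    intro u v hu hv
    exact le_trans (le_min hu hv) (omega_mul ω hone h1 u v)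
  inv_mem' := by
    intro u hu
    simpa [Set.mem_setOf_eq, omega_inv ω hone h1] using hu

lemma mem_levelSub {ω : G → ℝ≥0∞} {hone : ω 1 = ⊤}
    {h1 : ∀ x y : G, min (ω x) (ω y) ≤ ω (x * y⁻¹)} {w : ℝ≥0∞} {g : G} :
    g ∈ levelSub ω hone h1 w ↔ w ≤ ω g := Iff.rfl

lemma omega_conj (ω : G → ℝ≥0∞) (hone : ω 1 = ⊤)
    (h1 : ∀ x y : G, min (ω x) (ω y) ≤ ω (x * y⁻¹))
    (h2 : ∀ x y : G, ω x + ω y ≤ ω (x⁻¹ * y⁻¹ * x * y)) (u g : G) :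
    ω u ≤ ω (g * u * g⁻¹) := by
  have hc : ω u + ω g⁻¹ ≤ ω (u⁻¹ * g * u * g⁻¹) := by
    have h := h2 u g⁻¹
    rwa [inv_inv] at h
  have hsplit : g * u * g⁻¹ = u * (u⁻¹ * g * u * g⁻¹) := by group
  rw [hsplit]
  refine le_trans ?_ (omega_mul ω hone h1 _ _)
  exact le_min le_rfl (le_trans le_self_add hc)

lemma levelSub_normal (ω : G → ℝ≥0∞) (hone : ω 1 = ⊤)
    (h1 : ∀ x y : G, min (ω x) (ω y) ≤ ω (x * y⁻¹))
    (h2 : ∀ x y : G, ω x + ω y ≤ ω (x⁻¹ * y⁻¹ * x * y)) (w : ℝ≥0∞) :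
    (levelSub ω hone h1 w).Normal := by
  constructor
  intro u hu g
  exact le_trans hu (omega_conj ω hone h1 h2 u g)

lemma map_Pr {Q : Type*} [Group Q] (f : G →* Q) (c : ℕ → G) (n : ℕ) :
    f (Pr c n) = Pr (fun i => f (c i)) n := by
  induction n with
  | zero => simp [Pr]
  | succ n ih => simp [Pr, ih]

lemma prod_orbit (a y : G) (n : ℕ) :
    (a * y) ^ n = Pr (fun i => y ^ i * a * (y ^ i)⁻¹) n * y ^ n := by
  induction n with
  | zero => simp [Pr]
  | succ n ih =>
    rw [pow_succ, ih, Pr, pow_succ]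
    group

lemma key_ineq {p : ℕ} (hp : p.Prime) (ω : G → ℝ≥0∞)
    (hone : ω 1 = ⊤)
    (h1 : ∀ x y : G, min (ω x) (ω y) ≤ ω (x * y⁻¹))
    (h2 : ∀ x y : G, ω x + ω y ≤ ω (x⁻¹ * y⁻¹ * x * y))
    (h5 : ∀ x : G, ω (x ^ p) = ω x + 1)
    (μ : ℝ≥0∞) (a y : G) (hμa : μ ≤ ω a) (hμy : μ ≤ ω y) :
    min (2*μ + 1) ((p:ℝ≥0∞)*μ) ≤ ω ((a * y) ^ p * (y ^ p)⁻¹ * (a ^ p)⁻¹) := by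
  set T := min (2*μ + 1) ((p:ℝ≥0∞)*μ) with hT
  set N := levelSub ω hone h1 T with hNdef
  haveI hNn : N.Normal := levelSub_normal ω hone h1 h2 T
  set π := QuotientGroup.mk' N with hπdef
  have hmem_one : ∀ u : G, T ≤ ω u → π u = 1 := by
    intro u hu
    rw [← MonoidHom.mem_ker, QuotientGroup.ker_mk']
    exact hu
  set F : ℕ → Subgroup (G ⧸ N) :=
    fun k => (levelSub ω hone h1 ((k:ℝ≥0∞)*μ)).map π with hFdef
  have hΦanti : ∀ {i j : ℕ}, i ≤ j → F j ≤ F i := by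
    intro i j hij
    apply Subgroup.map_mono
    intro g hg
    exact le_trans (mul_le_mul_left (by exact_mod_cast hij) μ) hg
  set Φ : Filt (G ⧸ N) p :=
    { F := F
      anti := hΦanti
      norm := fun i =>
        Subgroup.Normal.map (levelSub_normal ω hone h1 h2 _) π
          (QuotientGroup.mk'_surjective N)
      fcomm := by
        intro i j u' v' hu hv
        obtain ⟨u, hu, rfl⟩ := hu
        obtain ⟨v, hv, rfl⟩ := hv
        refine ⟨u⁻¹ * v⁻¹ * u * v, ?_, by simp⟩
        have hcast : ((i+j : ℕ):ℝ≥0∞) * μ = (i:ℝ≥0∞)*μ + (j:ℝ≥0∞)*μ := by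
          push_cast; ring
        have hu' : (i:ℝ≥0∞)*μ ≤ ω u := hu
        have hv' : (j:ℝ≥0∞)*μ ≤ ω v := hv
        show ((i+j : ℕ):ℝ≥0∞) * μ ≤ ω (u⁻¹ * v⁻¹ * u * v)
        rw [hcast]
        exact le_trans (add_le_add hu' hv') (h2 u v)
      powp := by
        intro g' hg
        obtain ⟨u, hu, rfl⟩ := hg
        rw [← map_pow]
        apply hmem_one
        rw [h5 u]
        refine le_trans (min_le_left _ _) ?_
        have h2u : 2*μ ≤ ω u := by
          refine le_trans (le_of_eq ?_) hu
          push_cast; ring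
        exact add_le_add_left h2u 1
      ftop := by
        intro g' hg
        obtain ⟨u, hu, rfl⟩ := hg
        apply hmem_one
        exact le_trans (min_le_right _ _) hu }
    with hΦdef
  have hπa : π a ∈ Φ.F 1 := by
    refine ⟨a, ?_, rfl⟩
    show ((1:ℕ):ℝ≥0∞) * μ ≤ ω a
    simpa using hμa
  have hπy : π y ∈ Φ.F 1 := by
    refine ⟨y, ?_, rfl⟩
    show ((1:ℕ):ℝ≥0∞) * μ ≤ ω y
    simpa using hμy
  have habs := kl_abstract Φ hp hπa hπy
  have hG : (a * y) ^ p * (y ^ p)⁻¹ = Pr (fun i => y ^ i * a * (y ^ i)⁻¹) p := by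
    rw [prod_orbit a y p]
    group
  have hbridge : π ((a * y) ^ p * (y ^ p)⁻¹) = π (a ^ p) := by
    rw [hG, map_Pr]
    have horb : (fun i => π (y ^ i * a * (y ^ i)⁻¹))
        = fun i => (π y) ^ i * (π a) * ((π y) ^ i)⁻¹ := by
      funext i; simp
    rw [horb, habs, map_pow]
  have hone' : π ((a * y) ^ p * (y ^ p)⁻¹ * (a ^ p)⁻¹) = 1 := by
    rw [map_mul, map_inv, hbridge]
    group
  rw [← MonoidHom.mem_ker, QuotientGroup.ker_mk'] at hone'
  exact hone'

end Outer

end PVal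

open scoped ENNReal


/-- For a `p`-valued group `(G, ω)` the `ε`-action (induced by `x ↦ x^p`) on the
associated graded `gr(G) = ⊕ G_ν/G_ν⁺` is injective, i.e. `gr(G)` is a torsion-free
(equivalently free) graded `𝔽_p[ε]`-module: if `x, y ∈ G_ν` and
`x^p ≡ y^p mod G_{ν+1}⁺`, then `x ≡ y mod G_ν⁺`. -/
theorem graded_of_p_valued_torsion_free (p : ℕ) [Fact p.Prime]
    {G : Type*} [Group G] (ω : G → ℝ≥0∞) (hone : ω 1 = ⊤)
    (h1 : ∀ x y : G, min (ω x) (ω y) ≤ ω (x * y⁻¹))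
    (h2 : ∀ x y : G, ω x + ω y ≤ ω (x⁻¹ * y⁻¹ * x * y))
    (h3 : ∀ x : G, x ≠ 1 → ω x ≠ ⊤)
    (h4 : ∀ x : G, (1 : ℝ≥0∞) / ((p : ℝ≥0∞) - 1) < ω x)
    (h5 : ∀ x : G, ω (x ^ p) = ω x + 1) :
    ∀ ν : ℝ≥0∞, 0 < ν → ∀ x y : G, ν ≤ ω x → ν ≤ ω y →
      ν + 1 < ω (x ^ p * (y ^ p)⁻¹) → ν < ω (x * y⁻¹) := by
  intro ν hν0 x y hx hy h7
  have hp : p.Prime := Fact.out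
  have hνtop : ν ≠ ⊤ := by
    intro h
    rw [h] at h7
    simp at h7
  by_cases ha1 : x * y⁻¹ = 1
  · rw [ha1, hone]
    exact lt_top_iff_ne_top.mpr hνtop
  by_cases hy1 : y = 1
  · subst hy1
    rw [one_pow, inv_one, mul_one] at h7
    rw [h5 x] at h7
    rw [inv_one, mul_one]
    exact (ENNReal.add_lt_add_iff_right ENNReal.one_ne_top).mp h7
  -- main case
  set a := x * y⁻¹ with hadef
  set μ := min (ω a) (ω y) with hμdef
  have hνμ : ν ≤ μ := by
    refine le_min ?_ hy
    exact le_trans (le_min hx hy) (h1 x y)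
  have hμtop : μ ≠ ⊤ := by
    intro h
    have := min_le_left (ω a) (ω y)
    rw [← hμdef, h] at this
    exact h3 a ha1 (top_le_iff.mp this)
  have hμ0 : 0 < μ := lt_of_lt_of_le hν0 hνμ
  -- (p-1) facts
  have hp2 : 2 ≤ p := hp.two_le
  have hpc : (1:ℝ≥0∞) ≤ (p:ℝ≥0∞) - 1 := by
    refine ENNReal.le_sub_of_add_le_left ENNReal.one_ne_top ?_
    have h2c : ((2:ℕ):ℝ≥0∞) ≤ (p:ℝ≥0∞) := by exact_mod_cast hp2
    calc (1:ℝ≥0∞) + 1 = ((2:ℕ):ℝ≥0∞) := by norm_num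
      _ ≤ (p:ℝ≥0∞) := h2c
  have hpm1_ne0 : (p:ℝ≥0∞) - 1 ≠ 0 := by
    intro h
    rw [h] at hpc
    simp at hpc
  have hpm1_netop : (p:ℝ≥0∞) - 1 ≠ ⊤ := by
    refine ne_top_of_le_ne_top (ENNReal.natCast_ne_top p) tsub_le_self
  have hμbig : (1:ℝ≥0∞)/((p:ℝ≥0∞)-1) < μ := lt_min (h4 a) (h4 y)
  have hTμ : (1:ℝ≥0∞) < ((p:ℝ≥0∞)-1) * μ := by
    have := (ENNReal.mul_lt_mul_iff_right hpm1_ne0 hpm1_netop).mpr hμbig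
    rwa [ENNReal.mul_div_cancel hpm1_ne0 hpm1_netop] at this
  -- T > ν + 1
  have hT1 : ν + 1 < 2*μ + 1 := by
    rw [ENNReal.add_lt_add_iff_right ENNReal.one_ne_top]
    calc ν ≤ μ := hνμ
      _ < μ + μ := ENNReal.lt_add_right hμtop (ne_of_gt hμ0)
      _ = 2*μ := by ring
  have hT2 : ν + 1 < (p:ℝ≥0∞)*μ := by
    have hp1c : (1:ℝ≥0∞) ≤ (p:ℝ≥0∞) := by
      have h2c : ((2:ℕ):ℝ≥0∞) ≤ (p:ℝ≥0∞) := by exact_mod_cast hp2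
      refine le_trans ?_ h2c
      norm_num
    have hsplit : (p:ℝ≥0∞)*μ = μ + ((p:ℝ≥0∞)-1)*μ := by
      nth_rewrite 1 [← tsub_add_cancel_of_le hp1c]
      rw [add_mul, one_mul, add_comm]
    rw [hsplit]
    exact ENNReal.add_lt_add_of_le_of_lt hνtop hνμ hTμ
  -- key inequality
  have hkey := PVal.key_ineq hp ω hone h1 h2 h5 μ a y (min_le_left _ _) (min_le_right _ _)
  rw [show a * y = x by rw [hadef]; group] at hkey
  -- endgame
  have hsplit2 : a ^ p = (x ^ p * (y ^ p)⁻¹ * (a ^ p)⁻¹)⁻¹ * (x ^ p * (y ^ p)⁻¹) := by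
    group
  have hap : ν + 1 < ω (a ^ p) := by
    rw [hsplit2]
    refine lt_of_lt_of_le ?_ (PVal.omega_mul ω hone h1 _ _)
    rw [PVal.omega_inv ω hone h1]
    exact lt_min (lt_of_lt_of_le (lt_min hT1 hT2) hkey) h7
  rw [h5 a] at hap
  exact (ENNReal.add_lt_add_iff_right ENNReal.one_ne_top).mp hap
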